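/- Let (μ0^m)_{m∈ℕ} and (μ1^m)_{m∈ℕ} be sequences of probability measures on ℝ^d with finite first moments converging respectively to μ0 and μ1 in the Wasserstein-1 distance, with μ0^m ≤_cvx μ1^m for each m. Let μ^m be, for each m, a martingale coupling between μ0^m and μ1^m. Then the sequence (μ^m)_{m∈ℕ} is tight, and every weak limit point of (μ^m)_{m∈ℕ} is a martingale coupling between μ0 and μ1. -/

import Mathlib

open MeasureTheory Filter
open scoped ENNReal Topology

noncomputable section

abbrev Euc (d : ℕ) : Type := EuclideanSpace ℝ (Fin d)

/-- The Wasserstein "distance" of index `p`: infimum over couplings of the `p`-cost. -/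
def Wp {d : ℕ} (p : ℝ) (μ ν : Measure (Euc d)) : ℝ :=
  sInf { r | ∃ M : Measure (Euc d × Euc d), IsProbabilityMeasure M ∧ M.fst = μ ∧ M.snd = ν ∧
      r = (∫ z, ‖z.1 - z.2‖ ^ p ∂M) ^ (1/p) }

/-- Convex order `μ ≤_cvx ν` (tested on convex functions with linear growth). -/
def cvxOrder {d : ℕ} (μ ν : Measure (Euc d)) : Prop :=
  ∀ φ : Euc d → ℝ, ConvexOn ℝ Set.univ φ → (∃ C : ℝ, ∀ x, |φ x| ≤ C * (1 + ‖x‖)) →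
    ∫ x, φ x ∂μ ≤ ∫ x, φ x ∂ν

/-- Martingale coupling between `μ` and `ν`. -/
def IsMartingaleCoupling {d : ℕ} (M : Measure (Euc d × Euc d)) (μ ν : Measure (Euc d)) : Prop :=
  IsProbabilityMeasure M ∧ M.fst = μ ∧ M.snd = ν ∧
    ∀ φ : Euc d → Euc d, Measurable φ → (∃ C : ℝ, ∀ x, ‖φ x‖ ≤ C) →
      ∫ z, (inner ℝ (φ z.1) (z.2 - z.1) : ℝ) ∂M = 0

open Metric
open scoped NNReal

variable {d : ℕ}

/-- Extensionality for finite measures tested on bounded Lipschitz functions valued in [0,1]. -/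
lemma ext_of_lipschitz_tests (μ ν : Measure (Euc d)) [IsFiniteMeasure μ] [IsFiniteMeasure ν]
    (h : ∀ (K : ℝ≥0) (f : Euc d → ℝ), LipschitzWith K f → (∀ x, f x ∈ Set.Icc (0:ℝ) 1) →
      ∫ x, f x ∂μ = ∫ x, f x ∂ν) : μ = ν := by
  have hclosed : ∀ F : Set (Euc d), IsClosed F → μ F = ν F := by
    intro F hF
    rcases Set.eq_empty_or_nonempty F with rfl | hFne
    · simp
    set f : ℕ → Euc d → ℝ := fun n x => max (1 - n * infDist x F) 0 with hf
    have hlip : ∀ n : ℕ, LipschitzWith n (f n) := by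
      intro n
      refine LipschitzWith.of_dist_le_mul fun x y => ?_
      have hd : |infDist x F - infDist y F| ≤ dist x y := by
        rw [abs_sub_le_iff]
        constructor
        · have := infDist_le_infDist_add_dist (x := x) (y := y) (s := F); linarith
        · have := infDist_le_infDist_add_dist (x := y) (y := x) (s := F)
          rw [dist_comm] at this; linarith
      have h1 : dist (f n x) (f n y) ≤ |(1 - n * infDist x F) - (1 - n * infDist y F)| := by
        rw [Real.dist_eq, hf]
        exact abs_max_sub_max_le_abs _ _ _
      calc dist (f n x) (f n y) ≤ |(1 - n * infDist x F) - (1 - n * infDist y F)| := h1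
        _ = (n:ℝ) * |infDist x F - infDist y F| := by
            rw [show (1 - (n:ℝ) * infDist x F) - (1 - (n:ℝ) * infDist y F)
                = (n:ℝ) * (infDist y F - infDist x F) by ring,
              abs_mul, abs_of_nonneg (by positivity : (0:ℝ) ≤ (n:ℝ)),
              abs_sub_comm]
        _ ≤ ((n:ℝ≥0):ℝ) * dist x y := by
            push_cast
            exact mul_le_mul_of_nonneg_left hd (by positivity)
    have hicc : ∀ n x, f n x ∈ Set.Icc (0:ℝ) 1 := by
      intro n x
      refine ⟨le_max_right _ _, ?_⟩
      refine max_le ?_ zero_le_one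
      have : (0:ℝ) ≤ (n:ℝ) * infDist x F :=
        mul_nonneg (by positivity) infDist_nonneg
      linarith
    have hptw : ∀ x, Tendsto (fun n => f n x) atTop (𝓝 (Set.indicator F (fun _ => (1:ℝ)) x)) := by
      intro x
      by_cases hx : x ∈ F
      · have : ∀ n, f n x = 1 := by
          intro n; simp [hf, infDist_zero_of_mem hx]
        simp [this, Set.indicator_of_mem hx, tendsto_const_nhds]
      · have hpos : 0 < infDist x F := (hF.notMem_iff_infDist_pos hFne).1 hx
        have : ∀ᶠ n : ℕ in atTop, f n x = 0 := by
          have : Tendsto (fun n : ℕ => (n : ℝ) * infDist x F) atTop atTop :=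
            (tendsto_natCast_atTop_atTop).atTop_mul_const hpos
          filter_upwards [this.eventually_ge_atTop 1] with n hn
          simp only [hf]
          have : 1 - (n:ℝ) * infDist x F ≤ 0 := by linarith
          simp [max_eq_right this]
        rw [Set.indicator_of_notMem hx]
        exact Tendsto.congr' (this.mono fun n hn => hn.symm) tendsto_const_nhds
    have key : ∀ (ρ : Measure (Euc d)), IsFiniteMeasure ρ →
        Tendsto (fun n => ∫ x, f n x ∂ρ) atTop (𝓝 ((ρ F).toReal)) := by
      intro ρ hρ
      have := tendsto_integral_of_dominated_convergence (μ := ρ)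
        (F := fun n x => f n x) (f := Set.indicator F (fun _ => (1: ℝ)))
        (bound := fun _ => (1:ℝ))
        (fun n => ((hlip n).continuous.aestronglyMeasurable))
        (integrable_const 1)
        (fun n => Eventually.of_forall fun x => by
          rw [Real.norm_eq_abs, abs_of_nonneg (hicc n x).1]; exact (hicc n x).2)
        (Eventually.of_forall hptw)
      rwa [integral_indicator_const _ hF.measurableSet, smul_eq_mul, mul_one] at this
    have h1 := key μ inferInstance
    have h2 := key ν inferInstance
    have heq : ∀ n, ∫ x, f n x ∂μ = ∫ x, f n x ∂ν := fun n => h n _ (hlip n) (hicc n)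
    simp_rw [heq] at h1
    have := tendsto_nhds_unique h1 h2
    exact (ENNReal.toReal_eq_toReal_iff' (measure_ne_top _ _) (measure_ne_top _ _)).1 this
  refine ext_of_generate_finite _ ?_ isPiSystem_isClosed (fun s hs => hclosed s hs) (hclosed _ isClosed_univ)
  rw [BorelSpace.measurable_eq (α := Euc d), borel_eq_generateFrom_isClosed]

lemma integrable_comp_fst {M : Measure (Euc d × Euc d)} [IsProbabilityMeasure M]
    {g : Euc d → ℝ} (hg : AEStronglyMeasurable g M.fst) (h : Integrable g M.fst) :
    Integrable (fun z : Euc d × Euc d => g z.1) M := by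
  rw [Measure.fst] at h hg
  exact (integrable_map_measure hg measurable_fst.aemeasurable).1 h

lemma integrable_comp_snd {M : Measure (Euc d × Euc d)} [IsProbabilityMeasure M]
    {g : Euc d → ℝ} (hg : AEStronglyMeasurable g M.snd) (h : Integrable g M.snd) :
    Integrable (fun z : Euc d × Euc d => g z.2) M := by
  rw [Measure.snd] at h hg
  exact (integrable_map_measure hg measurable_snd.aemeasurable).1 h

lemma integrable_cost {M : Measure (Euc d × Euc d)} [IsProbabilityMeasure M]
    (h1 : Integrable (fun x => ‖x‖) M.fst) (h2 : Integrable (fun x => ‖x‖) M.snd) :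
    Integrable (fun z : Euc d × Euc d => ‖z.1 - z.2‖) M := by
  have i1 : Integrable (fun z : Euc d × Euc d => ‖z.1‖) M :=
    integrable_comp_fst continuous_norm.aestronglyMeasurable h1
  have i2 : Integrable (fun z : Euc d × Euc d => ‖z.2‖) M :=
    integrable_comp_snd continuous_norm.aestronglyMeasurable h2
  refine (i1.add i2).mono ?_ ?_
  · exact (continuous_fst.sub continuous_snd).norm.aestronglyMeasurable
  · refine Eventually.of_forall fun z => ?_
    simp only [Real.norm_eq_abs, abs_norm]
    calc ‖z.1 - z.2‖ ≤ ‖z.1‖ + ‖z.2‖ := norm_sub_le _ _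
      _ ≤ |‖z.1‖ + ‖z.2‖| := le_abs_self _

lemma le_Wp (μ ν : Measure (Euc d)) [IsProbabilityMeasure μ] [IsProbabilityMeasure ν]
    {a : ℝ}
    (h : ∀ M : Measure (Euc d × Euc d), IsProbabilityMeasure M → M.fst = μ → M.snd = ν →
      a ≤ ∫ z, ‖z.1 - z.2‖ ∂M) : a ≤ Wp 1 μ ν := by
  refine le_csInf ⟨(∫ z, ‖z.1 - z.2‖ ^ (1:ℝ) ∂(μ.prod ν)) ^ (1/(1:ℝ)),
    μ.prod ν, inferInstance, Measure.fst_prod, Measure.snd_prod, rfl⟩ ?_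
  rintro r ⟨M, hM, hMf, hMs, rfl⟩
  have : IsProbabilityMeasure M := hM
  simp only [show (1:ℝ)/1 = 1 by norm_num, Real.rpow_one]
  exact h M hM hMf hMs

lemma Wp_nonneg (μ ν : Measure (Euc d)) [IsProbabilityMeasure μ] [IsProbabilityMeasure ν] :
    0 ≤ Wp 1 μ ν := by
  refine le_Wp μ ν fun M hM h1 h2 => ?_
  exact integral_nonneg fun z => norm_nonneg _

lemma abs_integral_sub_le_Wp (μ ν : Measure (Euc d)) [IsProbabilityMeasure μ]
    [IsProbabilityMeasure ν]
    (hμ : Integrable (fun x => ‖x‖) μ) (hν : Integrable (fun x => ‖x‖) ν)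
    {K : ℝ≥0} {f : Euc d → ℝ} (hf : LipschitzWith K f) :
    |∫ x, f x ∂μ - ∫ x, f x ∂ν| ≤ K * Wp 1 μ ν := by
  have hfint : ∀ (ρ : Measure (Euc d)), IsProbabilityMeasure ρ →
      Integrable (fun x => ‖x‖) ρ → Integrable f ρ := by
    intro ρ hρ hm
    refine ((integrable_const |f 0|).add (hm.const_mul (K:ℝ))).mono
      hf.continuous.aestronglyMeasurable (Eventually.of_forall fun x => ?_)
    have h1 : |f x - f 0| ≤ (K:ℝ) * ‖x‖ := by
      have := hf.dist_le_mul x 0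
      rwa [Real.dist_eq, dist_eq_norm, sub_zero] at this
    have : |f x| ≤ |f 0| + (K:ℝ) * ‖x‖ := by
      have := abs_sub_abs_le_abs_sub (f x) (f 0); linarith
    simp only [Real.norm_eq_abs]
    calc |f x| ≤ |f 0| + (K:ℝ) * ‖x‖ := this
      _ ≤ |(|f 0| + (K:ℝ) * ‖x‖)| := le_abs_self _
  rcases eq_or_lt_of_le (show (0:ℝ≥0) ≤ K from zero_le) with hK0 | hKpos
  · have hconst : ∀ x, f x = f 0 := by
      intro x
      have := hf.dist_le_mul x 0
      rw [← hK0] at this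
      simp only [NNReal.coe_zero, zero_mul] at this
      have := le_antisymm this dist_nonneg
      rwa [Real.dist_eq, abs_eq_zero, sub_eq_zero] at this
    have e1 : ∫ x, f x ∂μ = f 0 := by
      rw [integral_congr_ae (Eventually.of_forall hconst)]; simp
    have e2 : ∫ x, f x ∂ν = f 0 := by
      rw [integral_congr_ae (Eventually.of_forall hconst)]; simp
    rw [e1, e2, sub_self, abs_zero, ← hK0]
    simp
  · have key : |∫ x, f x ∂μ - ∫ x, f x ∂ν| / (K:ℝ) ≤ Wp 1 μ ν := by
      refine le_Wp μ ν fun M hM hMf hMs => ?_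
      have : IsProbabilityMeasure M := hM
      rw [div_le_iff₀' (by exact_mod_cast hKpos)]
      have hfst : ∫ x, f x ∂μ = ∫ z, f z.1 ∂M := by
        rw [← hMf, Measure.fst, integral_map measurable_fst.aemeasurable
          hf.continuous.aestronglyMeasurable]
      have hsnd : ∫ x, f x ∂ν = ∫ z, f z.2 ∂M := by
        rw [← hMs, Measure.snd, integral_map measurable_snd.aemeasurable
          hf.continuous.aestronglyMeasurable]
      have if1 : Integrable (fun z : Euc d × Euc d => f z.1) M := by
        refine integrable_comp_fst hf.continuous.aestronglyMeasurable ?_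
        exact hfint M.fst (by rw [hMf]; infer_instance) (by rwa [hMf])
      have if2 : Integrable (fun z : Euc d × Euc d => f z.2) M := by
        refine integrable_comp_snd hf.continuous.aestronglyMeasurable ?_
        exact hfint M.snd (by rw [hMs]; infer_instance) (by rwa [hMs])
      have hcost : Integrable (fun z : Euc d × Euc d => ‖z.1 - z.2‖) M :=
        integrable_cost (by rwa [hMf]) (by rwa [hMs])
      rw [hfst, hsnd, ← integral_sub if1 if2]
      calc |∫ z, (f z.1 - f z.2) ∂M| ≤ ∫ z, |f z.1 - f z.2| ∂M := by
            simpa [Real.norm_eq_abs] using norm_integral_le_integral_norm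
              (fun z : Euc d × Euc d => f z.1 - f z.2) (μ := M)
        _ ≤ ∫ z, (K:ℝ) * ‖z.1 - z.2‖ ∂M := by
            refine integral_mono_of_nonneg (Eventually.of_forall fun z => abs_nonneg _)
              (hcost.const_mul _) (Eventually.of_forall fun z => ?_)
            have := hf.dist_le_mul z.1 z.2
            rwa [Real.dist_eq, dist_eq_norm] at this
        _ = (K:ℝ) * ∫ z, ‖z.1 - z.2‖ ∂M := integral_const_mul _ _
    rw [div_le_iff₀ (by exact_mod_cast hKpos)] at key
    linarith [key]

lemma tendsto_integral_of_Wp (ν : Measure (Euc d)) [IsProbabilityMeasure ν]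
    (hν : Integrable (fun x => ‖x‖) ν) (νm : ℕ → Measure (Euc d))
    (hP : ∀ m, IsProbabilityMeasure (νm m)) (hmom : ∀ m, Integrable (fun x => ‖x‖) (νm m))
    (hW : Tendsto (fun m => Wp 1 (νm m) ν) atTop (𝓝 0))
    {K : ℝ≥0} {f : Euc d → ℝ} (hf : LipschitzWith K f) :
    Tendsto (fun m => ∫ x, f x ∂(νm m)) atTop (𝓝 (∫ x, f x ∂ν)) := by
  rw [tendsto_iff_dist_tendsto_zero]
  refine squeeze_zero (g := fun m => (K:ℝ) * Wp 1 (νm m) ν) (fun m => dist_nonneg)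
    (fun m => ?_) (by simpa using hW.const_mul (K:ℝ))
  haveI := hP m
  rw [Real.dist_eq]
  exact abs_integral_sub_le_Wp (νm m) ν (hmom m) hν hf

/-- tail function `(‖x‖ - R)⁺`. -/
def tailF (R : ℝ) (x : Euc d) : ℝ := max (‖x‖ - R) 0

lemma tailF_lipschitz (R : ℝ) : LipschitzWith 1 (tailF (d := d) R) := by
  refine LipschitzWith.of_dist_le_mul fun x y => ?_
  rw [NNReal.coe_one, one_mul, Real.dist_eq]
  calc |tailF R x - tailF R y| ≤ |(‖x‖ - R) - (‖y‖ - R)| := abs_max_sub_max_le_abs _ _ _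
    _ = |‖x‖ - ‖y‖| := by ring_nf
    _ ≤ ‖x - y‖ := abs_norm_sub_norm_le _ _
    _ = dist x y := (dist_eq_norm _ _).symm

lemma tailF_nonneg (R : ℝ) (x : Euc d) : 0 ≤ tailF R x := le_max_right _ _

lemma tailF_le_norm {R : ℝ} (hR : 0 ≤ R) (x : Euc d) : tailF R x ≤ ‖x‖ := by
  refine max_le (by linarith) (norm_nonneg _)

lemma tailF_anti {R R' : ℝ} (h : R ≤ R') (x : Euc d) : tailF R' x ≤ tailF R x :=
  max_le_max (by linarith) le_rfl

lemma tailF_integrable {R : ℝ} (hR : 0 ≤ R) {ρ : Measure (Euc d)}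
    (hmom : Integrable (fun x => ‖x‖) ρ) : Integrable (tailF R) ρ := by
  refine hmom.mono ((tailF_lipschitz R).continuous.aestronglyMeasurable)
    (Eventually.of_forall fun x => ?_)
  rw [Real.norm_eq_abs, abs_of_nonneg (tailF_nonneg R x), Real.norm_eq_abs, abs_norm]
  exact tailF_le_norm hR x

lemma tailF_tendsto_zero (ρ : Measure (Euc d)) [IsProbabilityMeasure ρ]
    (hmom : Integrable (fun x => ‖x‖) ρ) :
    Tendsto (fun n : ℕ => ∫ x, tailF n x ∂ρ) atTop (𝓝 0) := by
  have h := tendsto_integral_of_dominated_convergence (μ := ρ)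
    (F := fun n : ℕ => tailF (d := d) n) (f := fun _ => (0:ℝ)) (bound := fun x => ‖x‖)
    (fun n => (tailF_lipschitz _).continuous.aestronglyMeasurable)
    hmom
    (fun n => Eventually.of_forall fun x => by
      simpa [Real.norm_eq_abs, abs_of_nonneg (tailF_nonneg _ x)] using
        tailF_le_norm (R := (n:ℝ)) (by positivity) x)
    (Eventually.of_forall fun x => ?_)
  · simpa using h
  · have : ∀ᶠ n : ℕ in atTop, tailF (n:ℝ) x = 0 := by
      filter_upwards [eventually_ge_atTop (Nat.ceil ‖x‖)] with n hn
      have : ‖x‖ ≤ (n:ℝ) := le_trans (Nat.le_ceil _) (by exact_mod_cast hn)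
      simp [tailF, max_eq_right, sub_nonpos.2 this]
    exact Tendsto.congr' (this.mono fun n hn => hn.symm) tendsto_const_nhds

/-- Uniform tail bound along a `W₁`-convergent sequence. -/
lemma uniform_tail (ν : Measure (Euc d)) [IsProbabilityMeasure ν]
    (hν : Integrable (fun x => ‖x‖) ν) (νm : ℕ → Measure (Euc d))
    (hP : ∀ m, IsProbabilityMeasure (νm m)) (hmom : ∀ m, Integrable (fun x => ‖x‖) (νm m))
    (hW : Tendsto (fun m => Wp 1 (νm m) ν) atTop (𝓝 0)) {ε : ℝ} (hε : 0 < ε) :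
    ∃ R : ℝ, 0 ≤ R ∧ (∀ m, ∫ x, tailF R x ∂(νm m) ≤ ε) ∧ ∫ x, tailF R x ∂ν ≤ ε := by
  -- choose R₀ with tail of ν ≤ ε/2
  obtain ⟨n₀, hn₀⟩ := ((tailF_tendsto_zero ν hν).eventually
    (eventually_le_nhds (show (0:ℝ) < ε/2 by linarith))).exists_forall_of_atTop
  -- choose N with Wp ≤ ε/2 for m ≥ N
  obtain ⟨N, hN⟩ := (hW.eventually (eventually_le_nhds (show (0:ℝ) < ε/2 by linarith))).exists_forall_of_atTop
  -- for each m < N choose R_m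
  have hsel : ∀ m, ∃ n : ℕ, ∫ x, tailF n x ∂(νm m) ≤ ε := by
    intro m
    haveI := hP m
    obtain ⟨n, hn⟩ := ((tailF_tendsto_zero (νm m) (hmom m)).eventually
      (eventually_le_nhds hε)).exists
    exact ⟨n, hn⟩
  choose sel hselspec using hsel
  set R : ℕ := max n₀ ((Finset.range N).sup sel) with hRdef
  have hmono : ∀ (ρ : Measure (Euc d)), Integrable (fun x => ‖x‖) ρ → ∀ n : ℕ, n ≤ R →
      ∫ x, tailF R x ∂ρ ≤ ∫ x, tailF n x ∂ρ := by
    intro ρ hm n hn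
    refine integral_mono (tailF_integrable (by positivity) hm)
      (tailF_integrable (by positivity) hm) fun x => tailF_anti (by exact_mod_cast hn) x
  refine ⟨R, by positivity, fun m => ?_, ?_⟩
  · haveI := hP m
    by_cases hm : m < N
    · calc ∫ x, tailF R x ∂(νm m) ≤ ∫ x, tailF (sel m) x ∂(νm m) :=
            hmono _ (hmom m) (sel m) (le_max_of_le_right (Finset.le_sup (Finset.mem_range.2 hm)))
        _ ≤ ε := hselspec m
    · have hWm : Wp 1 (νm m) ν ≤ ε/2 := hN m (not_lt.1 hm)
      have habs := abs_integral_sub_le_Wp (νm m) ν (hmom m) hν (tailF_lipschitz (n₀:ℝ))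
      rw [NNReal.coe_one, one_mul] at habs
      have h2 : ∫ x, tailF n₀ x ∂(νm m) ≤ ∫ x, tailF n₀ x ∂ν + Wp 1 (νm m) ν := by
        have := abs_le.1 habs
        linarith [this.2]
      calc ∫ x, tailF R x ∂(νm m) ≤ ∫ x, tailF n₀ x ∂(νm m) :=
            hmono _ (hmom m) n₀ (le_max_left _ _)
        _ ≤ ∫ x, tailF n₀ x ∂ν + Wp 1 (νm m) ν := h2
        _ ≤ ε/2 + ε/2 := add_le_add (hn₀ n₀ le_rfl) hWm
        _ = ε := by ring
  · calc ∫ x, tailF R x ∂ν ≤ ∫ x, tailF n₀ x ∂ν := hmono _ hν n₀ (le_max_left _ _)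
      _ ≤ ε/2 := hn₀ n₀ le_rfl
      _ ≤ ε := by linarith

lemma abs_coord_le_norm (x : Euc d) (i : Fin d) : |x i| ≤ ‖x‖ := by
  have h := abs_real_inner_le_norm (EuclideanSpace.single i (1:ℝ)) x
  rw [EuclideanSpace.inner_single_left, EuclideanSpace.norm_single] at h
  simpa using h

lemma coord_continuous (i : Fin d) :
    Continuous (fun z : Euc d × Euc d => (z.2 - z.1) i) :=
  (EuclideanSpace.proj (𝕜 := ℝ) i).continuous.comp (continuous_snd.sub continuous_fst)

/-- truncation at level `R`. -/
def trunc (R t : ℝ) : ℝ := max (-R) (min R t)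

lemma trunc_continuous (R : ℝ) : Continuous (trunc R) :=
  continuous_const.max (continuous_const.min continuous_id)

lemma abs_trunc_le {R : ℝ} (hR : 0 ≤ R) (t : ℝ) : |trunc R t| ≤ R := by
  rw [abs_le]
  constructor
  · exact le_max_left _ _
  · exact max_le (by linarith) (min_le_left _ _)

lemma abs_sub_trunc_le {R : ℝ} (hR : 0 ≤ R) (t : ℝ) :
    |t - trunc R t| ≤ max (|t| - R) 0 := by
  rcases le_total t (-R) with h | h
  · have : trunc R t = -R := by
      have : min R t ≤ -R := le_trans (min_le_right _ _) h
      simp [trunc, max_eq_left this]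
    rw [this]
    have habs : |t| = -t := abs_of_nonpos (by linarith)
    have : |t - -R| = -t - R := by
      rw [abs_of_nonpos (by linarith)]; ring
    rw [this, habs]
    exact le_max_left _ _
  · rcases le_total R t with h' | h'
    · have : trunc R t = R := by
        simp [trunc, min_eq_left h', max_eq_right (by linarith : -R ≤ R)]
      rw [this, abs_of_nonneg (by linarith : (0:ℝ) ≤ t - R)]
      have : |t| = t := abs_of_nonneg (by linarith)
      rw [this]
      exact le_max_left _ _
    · have : trunc R t = t := by
        simp [trunc, min_eq_right h', max_eq_right h]
      simp [this]

lemma max_sub_split {a b R : ℝ} (ha : 0 ≤ a) (hb : 0 ≤ b) :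
    max (a + b - R) 0 ≤ max (a - R/2) 0 + max (b - R/2) 0 := by
  rcases le_total (a + b) R with h | h
  · rw [max_eq_right (by linarith)]
    positivity
  · rw [max_eq_left (by linarith)]
    have h1 : a - R/2 ≤ max (a - R/2) 0 := le_max_left _ _
    have h2 : b - R/2 ≤ max (b - R/2) 0 := le_max_left _ _
    linarith

lemma integrable_mul_coord {ρ : Measure (Euc d × Euc d)} [IsProbabilityMeasure ρ]
    (h0 : Integrable (fun x => ‖x‖) ρ.fst) (h1 : Integrable (fun x => ‖x‖) ρ.snd)
    {f : Euc d → ℝ} (hf : Measurable f) {C : ℝ} (hC : ∀ x, |f x| ≤ C) (i : Fin d) :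
    Integrable (fun z : Euc d × Euc d => f z.1 * ((z.2 - z.1) i)) ρ := by
  have hC0 : 0 ≤ C := le_trans (abs_nonneg _) (hC 0)
  have i1 : Integrable (fun z : Euc d × Euc d => ‖z.1‖) ρ :=
    integrable_comp_fst continuous_norm.aestronglyMeasurable h0
  have i2 : Integrable (fun z : Euc d × Euc d => ‖z.2‖) ρ :=
    integrable_comp_snd continuous_norm.aestronglyMeasurable h1
  refine ((i1.add i2).const_mul C).mono
    (((hf.comp measurable_fst).mul
      (coord_continuous i).measurable).aestronglyMeasurable)
    (Eventually.of_forall fun z => ?_)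
  rw [Real.norm_eq_abs, abs_mul, Real.norm_eq_abs]
  calc |f z.1| * |(z.2 - z.1) i| ≤ C * ‖z.2 - z.1‖ :=
        mul_le_mul (hC _) (abs_coord_le_norm _ _) (abs_nonneg _) hC0
    _ ≤ C * (‖z.1‖ + ‖z.2‖) := by
        refine mul_le_mul_of_nonneg_left ?_ hC0
        calc ‖z.2 - z.1‖ ≤ ‖z.2‖ + ‖z.1‖ := norm_sub_le _ _
          _ = ‖z.1‖ + ‖z.2‖ := by ring
    _ ≤ |C * (‖z.1‖ + ‖z.2‖)| := le_abs_self _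

/-- truncation error bound for the integrand `f(x)·(y-x)ᵢ`. -/
lemma trunc_error_le {ρ : Measure (Euc d × Euc d)} [IsProbabilityMeasure ρ]
    (h0 : Integrable (fun x => ‖x‖) ρ.fst) (h1 : Integrable (fun x => ‖x‖) ρ.snd)
    {f : Euc d → ℝ} (hf : Continuous f) {C : ℝ} (hC : ∀ x, |f x| ≤ C) (i : Fin d)
    {R : ℝ} (hR : 0 ≤ R) :
    |∫ z, f z.1 * ((z.2 - z.1) i) ∂ρ - ∫ z, f z.1 * trunc R ((z.2 - z.1) i) ∂ρ|
      ≤ C * (∫ x, tailF (R/2) x ∂ρ.fst + ∫ x, tailF (R/2) x ∂ρ.snd) := by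
  have hC0 : 0 ≤ C := le_trans (abs_nonneg _) (hC 0)
  have hint1 := integrable_mul_coord h0 h1 hf.measurable hC i
  have hint2 : Integrable (fun z : Euc d × Euc d => f z.1 * trunc R ((z.2 - z.1) i)) ρ := by
    refine (integrable_const (C * R)).mono
      ((hf.comp continuous_fst).mul ((trunc_continuous R).comp (coord_continuous i))).aestronglyMeasurable
      (Eventually.of_forall fun z => ?_)
    rw [Real.norm_eq_abs, abs_mul, Real.norm_eq_abs]
    calc |f z.1| * |trunc R ((z.2 - z.1) i)| ≤ C * R :=
          mul_le_mul (hC _) (abs_trunc_le hR _) (abs_nonneg _) hC0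
      _ ≤ |C * R| := le_abs_self _
  have htail1 : Integrable (fun z : Euc d × Euc d => tailF (R/2) z.1) ρ :=
    integrable_comp_fst (tailF_lipschitz _).continuous.aestronglyMeasurable
      (tailF_integrable (by linarith) h0)
  have htail2 : Integrable (fun z : Euc d × Euc d => tailF (R/2) z.2) ρ :=
    integrable_comp_snd (tailF_lipschitz _).continuous.aestronglyMeasurable
      (tailF_integrable (by linarith) h1)
  rw [← integral_sub hint1 hint2]
  have key : ∀ z : Euc d × Euc d,
      |f z.1 * ((z.2 - z.1) i) - f z.1 * trunc R ((z.2 - z.1) i)|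
        ≤ C * (tailF (R/2) z.1 + tailF (R/2) z.2) := by
    intro z
    set t := (z.2 - z.1) i with ht
    rw [← mul_sub, abs_mul]
    calc |f z.1| * |t - trunc R t| ≤ C * max (|t| - R) 0 :=
          mul_le_mul (hC _) (abs_sub_trunc_le hR t) (abs_nonneg _) hC0
      _ ≤ C * (tailF (R/2) z.1 + tailF (R/2) z.2) := by
          refine mul_le_mul_of_nonneg_left ?_ hC0
          have h1' : |t| ≤ ‖z.1‖ + ‖z.2‖ := by
            calc |t| ≤ ‖z.2 - z.1‖ := abs_coord_le_norm (z.2 - z.1) i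
              _ ≤ ‖z.2‖ + ‖z.1‖ := norm_sub_le _ _
              _ = ‖z.1‖ + ‖z.2‖ := by ring
          calc max (|t| - R) 0 ≤ max (‖z.1‖ + ‖z.2‖ - R) 0 :=
                max_le_max (by linarith) le_rfl
            _ ≤ max (‖z.1‖ - R/2) 0 + max (‖z.2‖ - R/2) 0 :=
                max_sub_split (norm_nonneg _) (norm_nonneg _)
            _ = tailF (R/2) z.1 + tailF (R/2) z.2 := rfl
  calc |∫ z, (f z.1 * ((z.2 - z.1) i) - f z.1 * trunc R ((z.2 - z.1) i)) ∂ρ|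
      ≤ ∫ z, |f z.1 * ((z.2 - z.1) i) - f z.1 * trunc R ((z.2 - z.1) i)| ∂ρ := by
        simpa [Real.norm_eq_abs] using norm_integral_le_integral_norm
          (fun z : Euc d × Euc d => f z.1 * ((z.2 - z.1) i) - f z.1 * trunc R ((z.2 - z.1) i))
          (μ := ρ)
    _ ≤ ∫ z, C * (tailF (R/2) z.1 + tailF (R/2) z.2) ∂ρ := by
        refine integral_mono_of_nonneg (Eventually.of_forall fun z => abs_nonneg _)
          (((htail1.add htail2).const_mul C)) (Eventually.of_forall key)
    _ = C * (∫ z, tailF (R/2) z.1 ∂ρ + ∫ z, tailF (R/2) z.2 ∂ρ) := by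
        rw [← integral_add htail1 htail2, integral_const_mul]
    _ = C * (∫ x, tailF (R/2) x ∂ρ.fst + ∫ x, tailF (R/2) x ∂ρ.snd) := by
        rw [Measure.fst, Measure.snd,
          integral_map measurable_fst.aemeasurable
            (tailF_lipschitz _).continuous.aestronglyMeasurable,
          integral_map measurable_snd.aemeasurable
            (tailF_lipschitz _).continuous.aestronglyMeasurable]

lemma max_zero_sub_max_neg_zero (a : ℝ) : max a 0 - max (-a) 0 = a := by
  rcases le_total a 0 with h | h
  · rw [max_eq_right h, max_eq_left (by linarith)]; ring
  · rw [max_eq_left h, max_eq_right (by linarith)]; ring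

lemma isFiniteMeasure_rho {L : Measure (Euc d × Euc d)} [IsProbabilityMeasure L]
    (h0 : Integrable (fun x => ‖x‖) L.fst) (h1 : Integrable (fun x => ‖x‖) L.snd)
    {g : Euc d × Euc d → ℝ} (hg : ∀ z, |g z| ≤ ‖z.1‖ + ‖z.2‖) :
    IsFiniteMeasure (Measure.map Prod.fst (L.withDensity fun z => ENNReal.ofReal (g z))) := by
  constructor
  rw [Measure.map_apply measurable_fst MeasurableSet.univ]
  simp only [Set.preimage_univ]
  rw [withDensity_apply _ MeasurableSet.univ]
  have i1 : Integrable (fun z : Euc d × Euc d => ‖z.1‖) L :=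
    integrable_comp_fst continuous_norm.aestronglyMeasurable h0
  have i2 : Integrable (fun z : Euc d × Euc d => ‖z.2‖) L :=
    integrable_comp_snd continuous_norm.aestronglyMeasurable h1
  have hI : Integrable (fun z : Euc d × Euc d => ‖z.1‖ + ‖z.2‖) L := i1.add i2
  calc ∫⁻ z in Set.univ, ENNReal.ofReal (g z) ∂L
      = ∫⁻ z, ENNReal.ofReal (g z) ∂L := by rw [Measure.restrict_univ]
    _ ≤ ∫⁻ z, ‖‖z.1‖ + ‖z.2‖‖₊ ∂L := by
        refine lintegral_mono fun z => ?_
        calc ENNReal.ofReal (g z) ≤ ENNReal.ofReal (‖z.1‖ + ‖z.2‖) :=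
              ENNReal.ofReal_le_ofReal (le_trans (le_abs_self _) (hg z))
          _ ≤ ‖‖z.1‖ + ‖z.2‖‖₊ := Real.ofReal_le_enorm _
    _ < ⊤ := hI.2

lemma integral_rho_sub {L : Measure (Euc d × Euc d)} [IsProbabilityMeasure L]
    (h0 : Integrable (fun x => ‖x‖) L.fst) (h1 : Integrable (fun x => ‖x‖) L.snd)
    (i : Fin d) {h : Euc d → ℝ} (hh : Measurable h) {C : ℝ} (hC : ∀ x, |h x| ≤ C) :
    (∫ x, h x ∂(Measure.map Prod.fst
        (L.withDensity fun z => ENNReal.ofReal ((z.2 - z.1) i))))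
      - (∫ x, h x ∂(Measure.map Prod.fst
        (L.withDensity fun z => ENNReal.ofReal (-(z.2 - z.1) i))))
      = ∫ z, h z.1 * ((z.2 - z.1) i) ∂L := by
  have hC0 : 0 ≤ C := le_trans (abs_nonneg _) (hC 0)
  have hgc : Continuous (fun z : Euc d × Euc d => (z.2 - z.1) i) := coord_continuous i
  have i1 : Integrable (fun z : Euc d × Euc d => ‖z.1‖) L :=
    integrable_comp_fst continuous_norm.aestronglyMeasurable h0
  have i2 : Integrable (fun z : Euc d × Euc d => ‖z.2‖) L :=
    integrable_comp_snd continuous_norm.aestronglyMeasurable h1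
  have hbound : ∀ (u : Euc d × Euc d → ℝ), Continuous u → (∀ z, |u z| ≤ ‖z.1‖ + ‖z.2‖) →
      Integrable (fun z => u z * h z.1) L := by
    intro u hu hub
    refine (((i1.add i2).const_mul C).mono
      (hu.aestronglyMeasurable.mul ((hh.comp measurable_fst).aestronglyMeasurable))
      (Eventually.of_forall fun z => ?_))
    rw [Real.norm_eq_abs, abs_mul, Real.norm_eq_abs]
    calc |u z| * |h z.1| ≤ (‖z.1‖ + ‖z.2‖) * C :=
          mul_le_mul (hub z) (hC _) (abs_nonneg _) (by positivity)
      _ = C * (‖z.1‖ + ‖z.2‖) := by ring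
      _ ≤ |C * (‖z.1‖ + ‖z.2‖)| := le_abs_self _
  have habs : ∀ z : Euc d × Euc d, |(z.2 - z.1) i| ≤ ‖z.1‖ + ‖z.2‖ := by
    intro z
    calc |(z.2 - z.1) i| ≤ ‖z.2 - z.1‖ := abs_coord_le_norm _ _
      _ ≤ ‖z.2‖ + ‖z.1‖ := norm_sub_le _ _
      _ = ‖z.1‖ + ‖z.2‖ := by ring
  have key : ∀ (g : Euc d × Euc d → ℝ), Measurable g →
      (∫ x, h x ∂(Measure.map Prod.fst (L.withDensity fun z => ENNReal.ofReal (g z))))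
        = ∫ z, (g z).toNNReal • h z.1 ∂L := by
    intro g hgm
    rw [integral_map measurable_fst.aemeasurable hh.aestronglyMeasurable]
    have : (fun z => ENNReal.ofReal (g z)) = (fun z => ((g z).toNNReal : ℝ≥0∞)) := rfl
    rw [this, integral_withDensity_eq_integral_smul (hgm.real_toNNReal) (fun z => h z.1)]
  rw [key _ hgc.measurable, key (fun z => -(z.2 - z.1) i) hgc.neg.measurable]
  have e1 : ∀ z : Euc d × Euc d, (((z.2 - z.1) i).toNNReal : ℝ) • h z.1
      = max ((z.2 - z.1) i) 0 * h z.1 := by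
    intro z; rw [smul_eq_mul, Real.coe_toNNReal']
  have e2 : ∀ z : Euc d × Euc d, ((-(z.2 - z.1) i).toNNReal : ℝ) • h z.1
      = max (-(z.2 - z.1) i) 0 * h z.1 := by
    intro z; rw [smul_eq_mul, Real.coe_toNNReal']
  simp_rw [NNReal.smul_def, e1, e2]
  have int1 : Integrable (fun z : Euc d × Euc d => max ((z.2 - z.1) i) 0 * h z.1) L := by
    refine hbound _ (hgc.max continuous_const) fun z => ?_
    rw [abs_of_nonneg (le_max_right _ _)]
    exact max_le (le_trans (le_abs_self _) (habs z)) (by positivity)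
  have int2 : Integrable (fun z : Euc d × Euc d => max (-(z.2 - z.1) i) 0 * h z.1) L := by
    refine hbound _ (hgc.neg.max continuous_const) fun z => ?_
    rw [abs_of_nonneg (le_max_right _ _)]
    refine max_le (le_trans (le_abs_self _) ?_) (by positivity)
    rw [abs_neg]; exact habs z
  rw [← integral_sub int1 int2]
  congr 1
  funext z
  rw [← sub_mul, max_zero_sub_max_neg_zero]
  ring

lemma martingale_test {M : Measure (Euc d × Euc d)} {μ ν : Measure (Euc d)}
    (hM : IsProbabilityMeasure M ∧ M.fst = μ ∧ M.snd = ν ∧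
      ∀ φ : Euc d → Euc d, Measurable φ → (∃ C : ℝ, ∀ x, ‖φ x‖ ≤ C) →
        ∫ z, (inner ℝ (φ z.1) (z.2 - z.1) : ℝ) ∂M = 0)
    (i : Fin d) {f : Euc d → ℝ} (hf : Measurable f) {C : ℝ} (hC : ∀ x, |f x| ≤ C) :
    ∫ z, f z.1 * ((z.2 - z.1) i) ∂M = 0 := by
  have := hM.2.2.2 (fun x => f x • EuclideanSpace.single i (1:ℝ))
    (hf.smul_const _) ⟨C, fun x => by
      rw [norm_smul, EuclideanSpace.norm_single]
      simpa using hC x⟩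
  have heq : ∀ z : Euc d × Euc d,
      (inner ℝ (f z.1 • EuclideanSpace.single i (1:ℝ)) (z.2 - z.1) : ℝ)
        = f z.1 * ((z.2 - z.1) i) := by
    intro z
    rw [real_inner_smul_left, EuclideanSpace.inner_single_left]
    simp
  simp_rw [heq] at this
  exact this

lemma markov_ball {ρ : Measure (Euc d)} [IsProbabilityMeasure ρ]
    (hm : Integrable (fun x => ‖x‖) ρ) {B R : ℝ} (hB : ∫ x, ‖x‖ ∂ρ ≤ B) (hR : 0 < R) :
    ρ (Metric.closedBall 0 R)ᶜ ≤ ENNReal.ofReal (B / R) := by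
  have hsub : (Metric.closedBall (0 : Euc d) R)ᶜ ⊆ {x : Euc d | R ≤ ‖x‖} := by
    intro x hx
    simp only [Set.mem_compl_iff, Metric.mem_closedBall, dist_zero_right, not_le] at hx
    exact le_of_lt hx
  have hkey := mul_meas_ge_le_integral_of_nonneg (μ := ρ)
    (Eventually.of_forall fun x => norm_nonneg x) hm R
  have hmeas : ρ {x : Euc d | R ≤ ‖x‖} ≤ ENNReal.ofReal (B / R) := by
    rw [← ENNReal.ofReal_toReal (measure_ne_top ρ _)]
    refine ENNReal.ofReal_le_ofReal ?_
    rw [le_div_iff₀ hR, mul_comm]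
    exact le_trans hkey hB
  exact le_trans (measure_mono hsub) hmeas

lemma tail_int_mono {ρ : Measure (Euc d)} (hm : Integrable (fun x => ‖x‖) ρ)
    {R R' : ℝ} (h0 : 0 ≤ R) (h : R ≤ R') :
    ∫ x, tailF R' x ∂ρ ≤ ∫ x, tailF R x ∂ρ :=
  integral_mono (tailF_integrable (by linarith) hm) (tailF_integrable h0 hm)
    fun x => tailF_anti h x

lemma moment_bound (ν : Measure (Euc d)) [IsProbabilityMeasure ν]
    (hν : Integrable (fun x => ‖x‖) ν) (νm : ℕ → Measure (Euc d))
    (hP : ∀ m, IsProbabilityMeasure (νm m)) (hmom : ∀ m, Integrable (fun x => ‖x‖) (νm m))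
    (hW : Tendsto (fun m => Wp 1 (νm m) ν) atTop (𝓝 0)) :
    ∃ B : ℝ, 0 ≤ B ∧ ∀ m, ∫ x, ‖x‖ ∂(νm m) ≤ B := by
  have ht := tendsto_integral_of_Wp ν hν νm hP hmom hW lipschitzWith_one_norm
  obtain ⟨N, hN⟩ := (ht.eventually (eventually_le_nhds
    (lt_add_one (∫ x, ‖x‖ ∂ν)))).exists_forall_of_atTop
  set B : ℝ := ((∫ x, ‖x‖ ∂ν) + 1) + ∑ k ∈ Finset.range N, ∫ x, ‖x‖ ∂(νm k) with hB
  have hν0 : 0 ≤ ∫ x, ‖x‖ ∂ν := integral_nonneg fun x => norm_nonneg x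
  have hterm : ∀ k, 0 ≤ ∫ x, ‖x‖ ∂(νm k) := fun k => integral_nonneg fun x => norm_nonneg x
  have hsum0 : 0 ≤ ∑ k ∈ Finset.range N, ∫ x, ‖x‖ ∂(νm k) :=
    Finset.sum_nonneg fun k _ => hterm k
  refine ⟨B, by positivity, fun m => ?_⟩
  by_cases hm : m < N
  · have : ∫ x, ‖x‖ ∂(νm m) ≤ ∑ k ∈ Finset.range N, ∫ x, ‖x‖ ∂(νm k) :=
      Finset.single_le_sum (fun k _ => hterm k) (Finset.mem_range.2 hm)
    linarith
  · have := hN m (not_lt.1 hm)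
    linarith

theorem stmt2' {d : ℕ}
    (μ0 μ1 : Measure (Euc d)) [IsProbabilityMeasure μ0] [IsProbabilityMeasure μ1]
    (hm0 : Integrable (fun x => ‖x‖) μ0) (hm1 : Integrable (fun x => ‖x‖) μ1)
    (μ0m μ1m : ℕ → Measure (Euc d))
    (hP0 : ∀ m, IsProbabilityMeasure (μ0m m)) (hP1 : ∀ m, IsProbabilityMeasure (μ1m m))
    (hmom0 : ∀ m, Integrable (fun x => ‖x‖) (μ0m m))
    (hmom1 : ∀ m, Integrable (fun x => ‖x‖) (μ1m m))
    (hW0 : Tendsto (fun m => Wp 1 (μ0m m) μ0) atTop (𝓝 0))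
    (hW1 : Tendsto (fun m => Wp 1 (μ1m m) μ1) atTop (𝓝 0))
    (μm : ℕ → Measure (Euc d × Euc d))
    (hμm : ∀ m, IsProbabilityMeasure (μm m) ∧ (μm m).fst = μ0m m ∧ (μm m).snd = μ1m m ∧
      ∀ φ : Euc d → Euc d, Measurable φ → (∃ C : ℝ, ∀ x, ‖φ x‖ ≤ C) →
        ∫ z, (inner ℝ (φ z.1) (z.2 - z.1) : ℝ) ∂(μm m) = 0) :
    (∀ ε : ℝ, 0 < ε → ∃ K : Set (Euc d × Euc d), IsCompact K ∧
        ∀ m, μm m Kᶜ ≤ ENNReal.ofReal ε) := by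
  intro ε hε
  obtain ⟨B0, hB00, hB0⟩ := moment_bound μ0 hm0 μ0m hP0 hmom0 hW0
  obtain ⟨B1, hB10, hB1⟩ := moment_bound μ1 hm1 μ1m hP1 hmom1 hW1
  set R : ℝ := max 1 (2 * (B0 + B1) / ε) with hRdef
  have hR1 : (1:ℝ) ≤ R := le_max_left _ _
  have hRpos : 0 < R := lt_of_lt_of_le one_pos hR1
  have hR2 : 2 * (B0 + B1) / ε ≤ R := le_max_right _ _
  have hdiv : ∀ {B : ℝ}, 0 ≤ B → B ≤ B0 + B1 → B / R ≤ ε / 2 := by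
    intro B hB hBle
    rw [div_le_iff₀ hRpos]
    have h1 : 2 * (B0 + B1) ≤ ε * R := by
      rw [div_le_iff₀ hε] at hR2
      calc 2 * (B0 + B1) ≤ R * ε := hR2
        _ = ε * R := by ring
    nlinarith
  refine ⟨Metric.closedBall 0 R ×ˢ Metric.closedBall 0 R,
    (isCompact_closedBall _ _).prod (isCompact_closedBall _ _), fun m => ?_⟩
  haveI := (hμm m).1
  haveI := hP0 m
  haveI := hP1 m
  have hsub : (Metric.closedBall (0:Euc d) R ×ˢ Metric.closedBall (0:Euc d) R)ᶜ ⊆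
      (Prod.fst ⁻¹' (Metric.closedBall (0:Euc d) R)ᶜ) ∪
      (Prod.snd ⁻¹' (Metric.closedBall (0:Euc d) R)ᶜ) := by
    intro z hz
    simp only [Set.mem_compl_iff, Set.mem_prod, not_and_or] at hz
    rcases hz with h | h
    · exact Or.inl h
    · exact Or.inr h
  have hmb : MeasurableSet (Metric.closedBall (0:Euc d) R)ᶜ :=
    Metric.isClosed_closedBall.measurableSet.compl
  calc μm m (Metric.closedBall (0:Euc d) R ×ˢ Metric.closedBall (0:Euc d) R)ᶜ
      ≤ μm m (Prod.fst ⁻¹' (Metric.closedBall (0:Euc d) R)ᶜ)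
        + μm m (Prod.snd ⁻¹' (Metric.closedBall (0:Euc d) R)ᶜ) :=
        le_trans (measure_mono hsub) (measure_union_le _ _)
    _ = μ0m m (Metric.closedBall (0:Euc d) R)ᶜ + μ1m m (Metric.closedBall (0:Euc d) R)ᶜ := by
        rw [← Measure.fst_apply hmb, ← Measure.snd_apply hmb, (hμm m).2.1, (hμm m).2.2.1]
    _ ≤ ENNReal.ofReal (B0 / R) + ENNReal.ofReal (B1 / R) :=
        add_le_add (markov_ball (hmom0 m) (hB0 m) hRpos) (markov_ball (hmom1 m) (hB1 m) hRpos)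
    _ ≤ ENNReal.ofReal (ε/2) + ENNReal.ofReal (ε/2) :=
        add_le_add (ENNReal.ofReal_le_ofReal (hdiv hB00 (by linarith)))
          (ENNReal.ofReal_le_ofReal (hdiv hB10 (by linarith)))
    _ = ENNReal.ofReal ε := by
        rw [← ENNReal.ofReal_add (by linarith) (by linarith)]
        norm_num

theorem limit_coupling {d : ℕ}
    (μ0 μ1 : Measure (Euc d)) [IsProbabilityMeasure μ0] [IsProbabilityMeasure μ1]
    (hm0 : Integrable (fun x => ‖x‖) μ0) (hm1 : Integrable (fun x => ‖x‖) μ1)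
    (μ0m μ1m : ℕ → Measure (Euc d))
    (hP0 : ∀ m, IsProbabilityMeasure (μ0m m)) (hP1 : ∀ m, IsProbabilityMeasure (μ1m m))
    (hmom0 : ∀ m, Integrable (fun x => ‖x‖) (μ0m m))
    (hmom1 : ∀ m, Integrable (fun x => ‖x‖) (μ1m m))
    (hW0 : Tendsto (fun m => Wp 1 (μ0m m) μ0) atTop (𝓝 0))
    (hW1 : Tendsto (fun m => Wp 1 (μ1m m) μ1) atTop (𝓝 0))
    (μm : ℕ → Measure (Euc d × Euc d))
    (hμm : ∀ m, IsProbabilityMeasure (μm m) ∧ (μm m).fst = μ0m m ∧ (μm m).snd = μ1m m ∧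
      ∀ φ : Euc d → Euc d, Measurable φ → (∃ C : ℝ, ∀ x, ‖φ x‖ ≤ C) →
        ∫ z, (inner ℝ (φ z.1) (z.2 - z.1) : ℝ) ∂(μm m) = 0)
    (L : Measure (Euc d × Euc d)) (φ : ℕ → ℕ) (hφ : StrictMono φ)
    (hconv : ∀ f : BoundedContinuousFunction (Euc d × Euc d) ℝ,
      Tendsto (fun m => ∫ z, f z ∂(μm (φ m))) atTop (𝓝 (∫ z, f z ∂L))) :
    IsProbabilityMeasure L ∧ L.fst = μ0 ∧ L.snd = μ1 ∧
      ∀ ψ : Euc d → Euc d, Measurable ψ → (∃ C : ℝ, ∀ x, ‖ψ x‖ ≤ C) →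
        ∫ z, (inner ℝ (ψ z.1) (z.2 - z.1) : ℝ) ∂L = 0 := by
  haveI : ∀ m, IsProbabilityMeasure (μm m) := fun m => (hμm m).1
  have hφt : Tendsto φ atTop atTop := hφ.tendsto_atTop
  have hW0' : Tendsto (fun m => Wp 1 (μ0m (φ m)) μ0) atTop (𝓝 0) := hW0.comp hφt
  have hW1' : Tendsto (fun m => Wp 1 (μ1m (φ m)) μ1) atTop (𝓝 0) := hW1.comp hφt
  -- generic convergence of integrals of bounded continuous functions on the product
  have hconv' : ∀ (g : Euc d × Euc d → ℝ), Continuous g → ∀ C : ℝ, (∀ z, |g z| ≤ C) →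
      Tendsto (fun m => ∫ z, g z ∂(μm (φ m))) atTop (𝓝 (∫ z, g z ∂L)) := by
    intro g hg C hC
    exact hconv (BoundedContinuousFunction.ofNormedAddCommGroup g hg C
      (fun z => by rw [Real.norm_eq_abs]; exact hC z))
  -- L is a probability measure
  haveI hLprob : IsProbabilityMeasure L := by
    have h1 := hconv' (fun _ => (1:ℝ)) continuous_const 1 (fun z => by norm_num)
    have h2 : ∀ m, ∫ _, (1:ℝ) ∂(μm (φ m)) = 1 := fun m => by simp
    simp_rw [h2] at h1
    have h3 : ∫ _, (1:ℝ) ∂L = 1 := tendsto_nhds_unique h1 tendsto_const_nhds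
    rw [integral_const, smul_eq_mul, mul_one] at h3
    exact ⟨(ENNReal.toReal_eq_one_iff _).1 h3⟩
  -- identification of the marginals
  have hfst : L.fst = μ0 := by
    refine ext_of_lipschitz_tests _ _ fun K f hf hicc => ?_
    have habs : ∀ x, |f x| ≤ 1 := fun x => by
      rcases hicc x with ⟨h1, h2⟩
      rw [abs_le]; exact ⟨by linarith, h2⟩
    have t1 : Tendsto (fun m => ∫ x, f x ∂(μ0m (φ m))) atTop (𝓝 (∫ x, f x ∂μ0)) :=
      tendsto_integral_of_Wp μ0 hm0 (fun m => μ0m (φ m)) (fun m => hP0 _)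
        (fun m => hmom0 _) hW0' hf
    have t2 : Tendsto (fun m => ∫ z, f z.1 ∂(μm (φ m))) atTop (𝓝 (∫ z, f z.1 ∂L)) :=
      hconv' (fun z => f z.1) (hf.continuous.comp continuous_fst) 1 (fun z => habs _)
    have heq : ∀ m, ∫ z, f z.1 ∂(μm (φ m)) = ∫ x, f x ∂(μ0m (φ m)) := by
      intro m
      rw [← (hμm (φ m)).2.1, Measure.fst,
        integral_map measurable_fst.aemeasurable hf.continuous.aestronglyMeasurable]
    simp_rw [heq] at t2
    rw [Measure.fst, integral_map measurable_fst.aemeasurable hf.continuous.aestronglyMeasurable]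
    exact tendsto_nhds_unique t2 t1
  have hsnd : L.snd = μ1 := by
    refine ext_of_lipschitz_tests _ _ fun K f hf hicc => ?_
    have habs : ∀ x, |f x| ≤ 1 := fun x => by
      rcases hicc x with ⟨h1, h2⟩
      rw [abs_le]; exact ⟨by linarith, h2⟩
    have t1 : Tendsto (fun m => ∫ x, f x ∂(μ1m (φ m))) atTop (𝓝 (∫ x, f x ∂μ1)) :=
      tendsto_integral_of_Wp μ1 hm1 (fun m => μ1m (φ m)) (fun m => hP1 _)
        (fun m => hmom1 _) hW1' hf
    have t2 : Tendsto (fun m => ∫ z, f z.2 ∂(μm (φ m))) atTop (𝓝 (∫ z, f z.2 ∂L)) :=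
      hconv' (fun z => f z.2) (hf.continuous.comp continuous_snd) 1 (fun z => habs _)
    have heq : ∀ m, ∫ z, f z.2 ∂(μm (φ m)) = ∫ x, f x ∂(μ1m (φ m)) := by
      intro m
      rw [← (hμm (φ m)).2.2.1, Measure.snd,
        integral_map measurable_snd.aemeasurable hf.continuous.aestronglyMeasurable]
    simp_rw [heq] at t2
    rw [Measure.snd, integral_map measurable_snd.aemeasurable hf.continuous.aestronglyMeasurable]
    exact tendsto_nhds_unique t2 t1
  have h0L : Integrable (fun x => ‖x‖) L.fst := by rw [hfst]; exact hm0
  have h1L : Integrable (fun x => ‖x‖) L.snd := by rw [hsnd]; exact hm1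
  -- key step: vanishing of the martingale test integrals for continuous tests
  have keyzero : ∀ (i : Fin d) (f : Euc d → ℝ), Continuous f → ∀ C : ℝ, (∀ x, |f x| ≤ C) →
      ∫ z, f z.1 * ((z.2 - z.1) i) ∂L = 0 := by
    intro i f hf C hC
    have hC0 : 0 ≤ C := le_trans (abs_nonneg _) (hC 0)
    set I := ∫ z, f z.1 * ((z.2 - z.1) i) ∂L with hI
    have hbnd : ∀ ε' : ℝ, 0 < ε' → |I| ≤ 4 * C * ε' := by
      intro ε' hε'
      obtain ⟨R0, hR00, hR0m, hR0⟩ := uniform_tail μ0 hm0 (fun m => μ0m (φ m))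
        (fun m => hP0 _) (fun m => hmom0 _) hW0' hε'
      obtain ⟨R1, hR10, hR1m, hR1⟩ := uniform_tail μ1 hm1 (fun m => μ1m (φ m))
        (fun m => hP1 _) (fun m => hmom1 _) hW1' hε'
      set Rh : ℝ := max R0 R1 with hRh
      set R : ℝ := 2 * Rh with hRdef
      have hRh0 : 0 ≤ Rh := le_trans hR00 (le_max_left _ _)
      have hR0' : 0 ≤ R := by positivity
      have hRhalf : R / 2 = Rh := by rw [hRdef]; ring
      -- uniform tail bounds at level R/2
      have tail0 : ∀ m, ∫ x, tailF (R/2) x ∂(μ0m (φ m)) ≤ ε' := by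
        intro m
        rw [hRhalf]
        exact le_trans (tail_int_mono (hmom0 _) hR00 (le_max_left _ _)) (hR0m m)
      have tail1 : ∀ m, ∫ x, tailF (R/2) x ∂(μ1m (φ m)) ≤ ε' := by
        intro m
        rw [hRhalf]
        exact le_trans (tail_int_mono (hmom1 _) hR10 (le_max_right _ _)) (hR1m m)
      have tail0L : ∫ x, tailF (R/2) x ∂μ0 ≤ ε' := by
        rw [hRhalf]
        exact le_trans (tail_int_mono hm0 hR00 (le_max_left _ _)) hR0
      have tail1L : ∫ x, tailF (R/2) x ∂μ1 ≤ ε' := by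
        rw [hRhalf]
        exact le_trans (tail_int_mono hm1 hR10 (le_max_right _ _)) hR1
      -- the truncated integrand
      set gR : Euc d × Euc d → ℝ := fun z => f z.1 * trunc R ((z.2 - z.1) i) with hgR
      have hgRcont : Continuous gR :=
        (hf.comp continuous_fst).mul ((trunc_continuous R).comp (coord_continuous i))
      have hgRbnd : ∀ z, |gR z| ≤ C * R := by
        intro z
        rw [hgR, abs_mul]
        exact mul_le_mul (hC _) (abs_trunc_le hR0' _) (abs_nonneg _) hC0
      -- uniform bound for the truncated integrals along the sequence
      have hA : ∀ m, |∫ z, gR z ∂(μm (φ m))| ≤ C * (ε' + ε') := by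
        intro m
        have hzm : ∫ z, f z.1 * ((z.2 - z.1) i) ∂(μm (φ m)) = 0 :=
          martingale_test (hμm (φ m)) i hf.measurable hC
        have herr := trunc_error_le (ρ := μm (φ m))
          (by rw [(hμm (φ m)).2.1]; exact hmom0 _)
          (by rw [(hμm (φ m)).2.2.1]; exact hmom1 _) hf hC i hR0'
        rw [hzm, (hμm (φ m)).2.1, (hμm (φ m)).2.2.1] at herr
        rw [zero_sub, abs_neg] at herr
        calc |∫ z, gR z ∂(μm (φ m))|
            ≤ C * (∫ x, tailF (R/2) x ∂(μ0m (φ m)) + ∫ x, tailF (R/2) x ∂(μ1m (φ m))) := herr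
          _ ≤ C * (ε' + ε') := by
              refine mul_le_mul_of_nonneg_left (add_le_add (tail0 m) (tail1 m)) hC0
      have hB : Tendsto (fun m => ∫ z, gR z ∂(μm (φ m))) atTop (𝓝 (∫ z, gR z ∂L)) :=
        hconv' gR hgRcont (C * R) hgRbnd
      have hgRL : |∫ z, gR z ∂L| ≤ C * (ε' + ε') :=
        le_of_tendsto hB.abs (Eventually.of_forall hA)
      have herrL := trunc_error_le (ρ := L) h0L h1L hf hC i hR0'
      rw [hfst, hsnd] at herrL
      have herrL2 : |I - ∫ z, gR z ∂L| ≤ C * (ε' + ε') := by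
        calc |I - ∫ z, gR z ∂L|
            ≤ C * (∫ x, tailF (R/2) x ∂μ0 + ∫ x, tailF (R/2) x ∂μ1) := herrL
          _ ≤ C * (ε' + ε') := mul_le_mul_of_nonneg_left (add_le_add tail0L tail1L) hC0
      calc |I| = |(I - ∫ z, gR z ∂L) + ∫ z, gR z ∂L| := by congr 1; ring
        _ ≤ |I - ∫ z, gR z ∂L| + |∫ z, gR z ∂L| := abs_add_le _ _
        _ ≤ C * (ε' + ε') + C * (ε' + ε') := add_le_add herrL2 hgRL
        _ = 4 * C * ε' := by ring
    by_contra hne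
    have hpos : 0 < |I| := abs_pos.2 hne
    have := hbnd (|I| / (4 * C + 1)) (by positivity)
    have h4 : 4 * C * (|I| / (4 * C + 1)) < |I| := by
      rw [mul_div_assoc']
      rw [div_lt_iff₀ (by positivity)]
      nlinarith
    linarith
  -- the signed "conditional expectation" measures coincide
  have hrho : ∀ i : Fin d,
      Measure.map Prod.fst (L.withDensity fun z => ENNReal.ofReal ((z.2 - z.1) i))
        = Measure.map Prod.fst (L.withDensity fun z => ENNReal.ofReal (-(z.2 - z.1) i)) := by
    intro i
    have habs : ∀ z : Euc d × Euc d, |(z.2 - z.1) i| ≤ ‖z.1‖ + ‖z.2‖ := by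
      intro z
      calc |(z.2 - z.1) i| ≤ ‖z.2 - z.1‖ := abs_coord_le_norm _ _
        _ ≤ ‖z.2‖ + ‖z.1‖ := norm_sub_le _ _
        _ = ‖z.1‖ + ‖z.2‖ := by ring
    haveI := isFiniteMeasure_rho h0L h1L (g := fun z => (z.2 - z.1) i) habs
    haveI := isFiniteMeasure_rho h0L h1L (g := fun z => -(z.2 - z.1) i)
      (fun z => by rw [abs_neg]; exact habs z)
    refine ext_of_lipschitz_tests _ _ fun K f hf hicc => ?_
    have habsf : ∀ x, |f x| ≤ 1 := fun x => by
      rcases hicc x with ⟨h1, h2⟩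
      rw [abs_le]; exact ⟨by linarith, h2⟩
    have := integral_rho_sub h0L h1L i hf.continuous.measurable habsf
    rw [keyzero i f hf.continuous 1 habsf] at this
    linarith [this]
  refine ⟨hLprob, hfst, hsnd, ?_⟩
  rintro ψ hψ ⟨C, hCψ⟩
  have hψi : ∀ i : Fin d, Measurable (fun x => ψ x i) := by
    intro i
    exact ((EuclideanSpace.proj (𝕜 := ℝ) i).continuous.measurable).comp hψ
  have hψib : ∀ (i : Fin d) (x : Euc d), |ψ x i| ≤ C := by
    intro i x
    exact le_trans (abs_coord_le_norm _ _) (hCψ x)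
  have hterm : ∀ i : Fin d, ∫ z, ψ z.1 i * ((z.2 - z.1) i) ∂L = 0 := by
    intro i
    have := integral_rho_sub h0L h1L i (hψi i) (hψib i)
    rw [hrho i, sub_self] at this
    exact this.symm
  have hinner : ∀ z : Euc d × Euc d,
      (inner ℝ (ψ z.1) (z.2 - z.1) : ℝ) = ∑ i, ψ z.1 i * ((z.2 - z.1) i) := by
    intro z
    rw [PiLp.inner_apply]
    simp only [RCLike.inner_apply, starRingEnd_apply, star_trivial]
    simp only [mul_comm]
  have hintg : ∀ i : Fin d, Integrable (fun z : Euc d × Euc d => ψ z.1 i * ((z.2 - z.1) i)) L :=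
    fun i => integrable_mul_coord h0L h1L (hψi i) (hψib i) i
  calc ∫ z, (inner ℝ (ψ z.1) (z.2 - z.1) : ℝ) ∂L
      = ∫ z, ∑ i, ψ z.1 i * ((z.2 - z.1) i) ∂L := by
        exact integral_congr_ae (Eventually.of_forall hinner)
    _ = ∑ i, ∫ z, ψ z.1 i * ((z.2 - z.1) i) ∂L :=
        integral_finset_sum _ (fun i _ => hintg i)
    _ = 0 := by simp only [hterm, Finset.sum_const_zero]


/-- If `μ0^m → μ0` and `μ1^m → μ1` in `W₁` with `μ0^m ≤_cvx μ1^m`, and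
`μ^m` is a martingale coupling of `(μ0^m, μ1^m)` for each `m`, then `(μ^m)` is tight and
every weak limit point of `(μ^m)` is a martingale coupling between `μ0` and `μ1`. -/
theorem stmt2 {d : ℕ}
    (μ0 μ1 : Measure (Euc d)) [IsProbabilityMeasure μ0] [IsProbabilityMeasure μ1]
    (hm0 : Integrable (fun x => ‖x‖) μ0) (hm1 : Integrable (fun x => ‖x‖) μ1)
    (μ0m μ1m : ℕ → Measure (Euc d))
    (hP0 : ∀ m, IsProbabilityMeasure (μ0m m)) (hP1 : ∀ m, IsProbabilityMeasure (μ1m m))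
    (hmom0 : ∀ m, Integrable (fun x => ‖x‖) (μ0m m))
    (hmom1 : ∀ m, Integrable (fun x => ‖x‖) (μ1m m))
    (hW0 : Tendsto (fun m => Wp 1 (μ0m m) μ0) atTop (𝓝 0))
    (hW1 : Tendsto (fun m => Wp 1 (μ1m m) μ1) atTop (𝓝 0))
    (hcvx : ∀ m, cvxOrder (μ0m m) (μ1m m))
    (μm : ℕ → Measure (Euc d × Euc d))
    (hμm : ∀ m, IsMartingaleCoupling (μm m) (μ0m m) (μ1m m)) :
    (∀ ε : ℝ, 0 < ε → ∃ K : Set (Euc d × Euc d), IsCompact K ∧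
        ∀ m, μm m Kᶜ ≤ ENNReal.ofReal ε)
    ∧ ∀ (L : Measure (Euc d × Euc d)) (φ : ℕ → ℕ), StrictMono φ →
        (∀ f : BoundedContinuousFunction (Euc d × Euc d) ℝ,
          Tendsto (fun m => ∫ z, f z ∂(μm (φ m))) atTop (𝓝 (∫ z, f z ∂L))) →
        IsMartingaleCoupling L μ0 μ1 := by
  constructor
  · exact stmt2' μ0 μ1 hm0 hm1 μ0m μ1m hP0 hP1 hmom0 hmom1 hW0 hW1 μm (fun m => hμm m)
  · intro L φ hφ hconv
    exact limit_coupling μ0 μ1 hm0 hm1 μ0m μ1m hP0 hP1 hmom0 hmom1 hW0 hW1 μm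
      (fun m => hμm m) L φ hφ hconv

end
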